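/- arXiv:1804.04615 — 6 statements merged into one kernel-verified Lean document; each statement's English description precedes it below -/
import Mathlib

section
/- Let (Λ_ω)_{ω∈Ω} be a cg-orthonormal system for H with respect to (H_ω)_{ω∈Ω} such that ∫_Ω ‖Λ_ω h‖² dμ(ω) < ∞ for every h ∈ H. If for every μ-null set Ω₀ ⊆ Ω the closed linear span of ⋃_{ω ∈ Ω∖Ω₀} Λ_ω*(H_ω) equals H, then ⟨h, k⟩ = ∫_Ω ⟨Λ_ω h, Λ_ω k⟩ dμ(ω) for all h, k ∈ H. -/
open MeasureTheory
open scoped ENNReal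

noncomputable section

variable {Ω : Type*} [MeasurableSpace Ω]
variable {H : Type*} [NormedAddCommGroup H] [InnerProductSpace ℂ H] [CompleteSpace H]
  [TopologicalSpace.SeparableSpace H]
variable {G : Ω → Type*} [∀ ω, NormedAddCommGroup (G ω)] [∀ ω, InnerProductSpace ℂ (G ω)]
  [∀ ω, CompleteSpace (G ω)]

/-- Condition (i): for all `h k`, the function `ω ↦ ⟨Λ ω h, Λ ω k⟩` is measurable. -/
def CgMeasurable (μ : Measure Ω) (Λ : ∀ ω, H →L[ℂ] G ω) : Prop :=
  ∀ h k : H, Measurable fun ω => (inner ℂ (Λ ω h) (Λ ω k) : ℂ)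

/-- Condition (ii): the orthonormality relation for the adjoints. -/
def CgOrthoCondition (μ : Measure Ω) (Λ : ∀ ω, H →L[ℂ] G ω) : Prop :=
  ∀ᵐ ν ∂μ, ∀ g : G ν, ∀ f : ∀ ω, G ω,
    Integrable (fun ω => ‖f ω‖ ^ 2) μ →
    Integrable (fun ω =>
      (inner ℂ (ContinuousLinearMap.adjoint (Λ ω) (f ω))
        (ContinuousLinearMap.adjoint (Λ ν) g) : ℂ)) μ →
    ∫ ω, (inner ℂ (ContinuousLinearMap.adjoint (Λ ω) (f ω))
        (ContinuousLinearMap.adjoint (Λ ν) g) : ℂ) ∂μ = (inner ℂ (f ν) g : ℂ)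

/-- A `cg`-orthonormal system: conditions (i) and (ii). -/
def IsCgOrthonormalSystem (μ : Measure Ω) (Λ : ∀ ω, H →L[ℂ] G ω) : Prop :=
  CgMeasurable μ Λ ∧ CgOrthoCondition μ Λ

/-- A `cg`-orthonormal basis: conditions (i), (ii) and (iii). -/
def IsCgOrthonormalBasis (μ : Measure Ω) (Λ : ∀ ω, H →L[ℂ] G ω) : Prop :=
  IsCgOrthonormalSystem μ Λ ∧
    ∀ h : H, Integrable (fun ω => ‖Λ ω h‖ ^ 2) μ ∧ ∫ ω, ‖Λ ω h‖ ^ 2 ∂μ = ‖h‖ ^ 2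

/-- A `cg`-frame with bounds `A` and `B`. -/
def IsCgFrameWith (μ : Measure Ω) (Λ : ∀ ω, H →L[ℂ] G ω) (A B : ℝ) : Prop :=
  CgMeasurable μ Λ ∧
    ∀ h : H, Integrable (fun ω => ‖Λ ω h‖ ^ 2) μ ∧
      A * ‖h‖ ^ 2 ≤ ∫ ω, ‖Λ ω h‖ ^ 2 ∂μ ∧ ∫ ω, ‖Λ ω h‖ ^ 2 ∂μ ≤ B * ‖h‖ ^ 2

/-- A `cg`-frame (with some bounds `0 < A ≤ B`). -/
def IsCgFrame (μ : Measure Ω) (Λ : ∀ ω, H →L[ℂ] G ω) : Prop :=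
  ∃ A B : ℝ, 0 < A ∧ A ≤ B ∧ IsCgFrameWith μ Λ A B

/-- A `cg`-Bessel family with Bessel bound `B`. -/
def IsCgBessel (μ : Measure Ω) (Λ : ∀ ω, H →L[ℂ] G ω) (B : ℝ) : Prop :=
  CgMeasurable μ Λ ∧
    ∀ h : H, Integrable (fun ω => ‖Λ ω h‖ ^ 2) μ ∧ ∫ ω, ‖Λ ω h‖ ^ 2 ∂μ ≤ B * ‖h‖ ^ 2

/-- A tight `cg`-frame with frame bound `A`. -/
def IsTightCgFrame (μ : Measure Ω) (Λ : ∀ ω, H →L[ℂ] G ω) (A : ℝ) : Prop :=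
  CgMeasurable μ Λ ∧
    ∀ h : H, Integrable (fun ω => ‖Λ ω h‖ ^ 2) μ ∧ ∫ ω, ‖Λ ω h‖ ^ 2 ∂μ = A * ‖h‖ ^ 2

/-- A Parseval `cg`-frame. -/
def IsParsevalCgFrame (μ : Measure Ω) (Λ : ∀ ω, H →L[ℂ] G ω) : Prop :=
  CgMeasurable μ Λ ∧
    ∀ h : H, Integrable (fun ω => ‖Λ ω h‖ ^ 2) μ ∧ ∫ ω, ‖Λ ω h‖ ^ 2 ∂μ = ‖h‖ ^ 2

/-- A `cg`-complete family. -/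
def CgComplete (μ : Measure Ω) (Λ : ∀ ω, H →L[ℂ] G ω) : Prop :=
  ∀ h : H, (∀ᵐ ω ∂μ, Λ ω h = 0) → h = 0

section CgAux

variable {μ : Measure Ω} {Λ : ∀ ω, H →L[ℂ] G ω}


lemma cg_norm_measurable (hmeas : CgMeasurable μ Λ) (h : H) :
    Measurable fun ω => ‖Λ ω h‖ := by
  have h1 : Measurable fun ω => ‖Λ ω h‖ ^ 2 := by
    have h2 : (fun ω => ‖Λ ω h‖ ^ 2)
        = fun ω => RCLike.re (inner ℂ (Λ ω h) (Λ ω h) : ℂ) := by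
      funext ω; rw [inner_self_eq_norm_sq]
    rw [h2]
    exact RCLike.measurable_re.comp (hmeas h h)
  have h3 : (fun ω => ‖Λ ω h‖) = fun ω => Real.sqrt (‖Λ ω h‖ ^ 2) := by
    funext ω; rw [Real.sqrt_sq (norm_nonneg _)]
  rw [h3]
  exact Measurable.sqrt h1

lemma cg_memLp (hmeas : CgMeasurable μ Λ)
    (hint : ∀ h : H, Integrable (fun ω => ‖Λ ω h‖ ^ 2) μ) (h : H) :
    MemLp (fun ω => ‖Λ ω h‖) 2 μ :=
  (memLp_two_iff_integrable_sq
    (cg_norm_measurable hmeas h).aestronglyMeasurable).mpr (hint h)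

lemma cg_integrable_prod (hmeas : CgMeasurable μ Λ)
    (hint : ∀ h : H, Integrable (fun ω => ‖Λ ω h‖ ^ 2) μ) (h k : H) :
    Integrable (fun ω => ‖Λ ω h‖ * ‖Λ ω k‖) μ := by
  have h1 := L2.integrable_inner (𝕜 := ℝ)
    ((cg_memLp hmeas hint h).toLp _) ((cg_memLp hmeas hint k).toLp _)
  refine h1.congr ?_
  filter_upwards [MemLp.coeFn_toLp (cg_memLp hmeas hint h),
    MemLp.coeFn_toLp (cg_memLp hmeas hint k)] with ω e1 e2
  simp [RCLike.inner_apply, e1, e2, mul_comm]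

lemma cg_cs (hmeas : CgMeasurable μ Λ)
    (hint : ∀ h : H, Integrable (fun ω => ‖Λ ω h‖ ^ 2) μ) (h k : H) :
    ∫ ω, ‖Λ ω h‖ * ‖Λ ω k‖ ∂μ
      ≤ (eLpNorm (fun ω => ‖Λ ω h‖) 2 μ).toReal
        * (eLpNorm (fun ω => ‖Λ ω k‖) 2 μ).toReal := by
  set fh := (cg_memLp hmeas hint h).toLp _ with hfh
  set fk := (cg_memLp hmeas hint k).toLp _ with hfk
  have h1 : ∫ ω, ‖Λ ω h‖ * ‖Λ ω k‖ ∂μ = (inner ℝ fh fk : ℝ) := by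
    rw [L2.inner_def]
    refine integral_congr_ae ?_
    filter_upwards [MemLp.coeFn_toLp (cg_memLp hmeas hint h),
      MemLp.coeFn_toLp (cg_memLp hmeas hint k)] with ω e1 e2
    simp [RCLike.inner_apply, hfh, hfk, e1, e2, mul_comm]
  rw [h1]
  refine le_trans (real_inner_le_norm fh fk) ?_
  rw [Lp.norm_toLp (fun ω => ‖Λ ω h‖) (cg_memLp hmeas hint h), Lp.norm_toLp (fun ω => ‖Λ ω k‖) (cg_memLp hmeas hint k)]

lemma cg_smul (hmeas : CgMeasurable μ Λ) (a : ℂ) (v : H) :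
    eLpNorm (fun ω => ‖Λ ω (a • v)‖) 2 μ = ‖a‖₊ * eLpNorm (fun ω => ‖Λ ω v‖) 2 μ := by
  have h1 : (fun ω => ‖Λ ω (a • v)‖) = (‖a‖ : ℝ) • fun ω => ‖Λ ω v‖ := by
    funext ω; simp [norm_smul]
  rw [h1, eLpNorm_const_smul, enorm_norm]
  rfl

lemma cg_sub (hmeas : CgMeasurable μ Λ) (a b : H) :
    eLpNorm (fun ω => ‖Λ ω (a - b)‖) 2 μ
      ≤ eLpNorm (fun ω => ‖Λ ω a‖) 2 μ + eLpNorm (fun ω => ‖Λ ω b‖) 2 μ := by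
  have h1 : eLpNorm (fun ω => ‖Λ ω (a - b)‖) 2 μ
      ≤ eLpNorm ((fun ω => ‖Λ ω a‖) + fun ω => ‖Λ ω b‖) 2 μ := by
    refine eLpNorm_mono fun ω => ?_
    simp only [Pi.add_apply, norm_norm, Real.norm_eq_abs]
    rw [abs_of_nonneg (norm_nonneg _)]
    calc ‖Λ ω (a - b)‖ = ‖Λ ω a - Λ ω b‖ := by rw [_root_.map_sub]
      _ ≤ ‖Λ ω a‖ + ‖Λ ω b‖ := norm_sub_le _ _
      _ ≤ |‖Λ ω a‖ + ‖Λ ω b‖| := le_abs_self _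
  exact h1.trans (eLpNorm_add_le (cg_norm_measurable hmeas a).aestronglyMeasurable
    (cg_norm_measurable hmeas b).aestronglyMeasurable one_le_two)

lemma cg_bessel (hmeas : CgMeasurable μ Λ)
    (hint : ∀ h : H, Integrable (fun ω => ‖Λ ω h‖ ^ 2) μ) :
    ∃ B : ℝ, 0 ≤ B ∧ ∀ k : H,
      (eLpNorm (fun ω => ‖Λ ω k‖) 2 μ).toReal ≤ B * ‖k‖ := by
  set N : H → ℝ≥0∞ := fun k => eLpNorm (fun ω => ‖Λ ω k‖) 2 μ with hN
  have hfin : ∀ k, N k < ⊤ := fun k => (cg_memLp hmeas hint k).2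
  have hclosed : ∀ n : ℕ, IsClosed {k : H | N k ≤ n} := by
    intro n
    refine IsSeqClosed.isClosed ?_
    intro f k hf hfk
    have hlim : ∀ᵐ ω ∂μ, Filter.Tendsto (fun j => ‖Λ ω (f j)‖)
        Filter.atTop (nhds ‖Λ ω k‖) :=
      Filter.Eventually.of_forall fun ω =>
        (((Λ ω).continuous.tendsto k).comp hfk).norm
    have h1 := Lp.eLpNorm_lim_le_liminf_eLpNorm (p := 2) (μ := μ)
      (fun j => (cg_norm_measurable hmeas (f j)).aestronglyMeasurable)
      (fun ω => ‖Λ ω k‖) hlim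
    refine le_trans h1 ?_
    calc Filter.liminf (fun j => N (f j)) Filter.atTop
        ≤ Filter.liminf (fun _ : ℕ => (n : ℝ≥0∞)) Filter.atTop :=
          Filter.liminf_le_liminf (Filter.Eventually.of_forall fun j => hf j)
      _ = n := Filter.liminf_const _
  have hcover : (⋃ n : ℕ, {k : H | N k ≤ n}) = Set.univ := by
    refine Set.eq_univ_of_forall fun k => ?_
    obtain ⟨n, hn⟩ := ENNReal.exists_nat_gt (hfin k).ne
    exact Set.mem_iUnion.mpr ⟨n, hn.le⟩
  obtain ⟨n, x, hx⟩ := nonempty_interior_of_iUnion_of_closed hclosed hcover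
  rw [mem_interior_iff_mem_nhds, Metric.mem_nhds_iff] at hx
  obtain ⟨r, hr, hball⟩ := hx
  have hx0 : N x ≤ n := hball (Metric.mem_ball_self hr)
  have key : ∀ u : H, ‖u‖ < r → N u ≤ 2 * n := by
    intro u hu
    have h1 : N (x + u) ≤ n := by
      refine hball ?_
      simp [Metric.mem_ball, dist_self_add_left, hu]
    have h2 : N u = N ((x + u) - x) := by rw [add_sub_cancel_left]
    rw [h2]
    calc N ((x + u) - x) ≤ N (x + u) + N x := cg_sub hmeas _ _
      _ ≤ n + n := add_le_add h1 hx0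
      _ = 2 * n := (two_mul _).symm
  refine ⟨4 * n / r, by positivity, fun k => ?_⟩
  rcases eq_or_ne k 0 with rfl | hk
  · have h0 : N (0 : H) = 0 := by
      have he : (fun ω => ‖Λ ω (0 : H)‖) = fun _ => (0 : ℝ) := by
        funext ω; simp
      simp [hN, he]
    rw [hN] at h0
    simp only [h0]
    simp
  · set c : ℝ := r / (2 * ‖k‖) with hc
    have hknorm : 0 < ‖k‖ := norm_pos_iff.mpr hk
    have hcpos : 0 < c := by positivity
    have hu : ‖(c : ℂ) • k‖ < r := by
      rw [norm_smul]
      simp only [Complex.norm_real, Real.norm_eq_abs, abs_of_pos hcpos]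
      rw [hc, div_mul_eq_mul_div, mul_comm]
      rw [div_lt_iff₀ (by positivity)]
      nlinarith
    have h2 : N ((c : ℂ) • k) ≤ 2 * n := key _ hu
    have h3 : N k = ‖((c : ℂ))⁻¹‖₊ * N ((c : ℂ) • k) := by
      have : k = ((c : ℂ))⁻¹ • ((c : ℂ) • k) := by
        rw [smul_smul, inv_mul_cancel₀ (by exact_mod_cast hcpos.ne'), one_smul]
      conv_lhs => rw [this]
      exact cg_smul hmeas _ _
    have h4 : N k ≤ (‖((c : ℂ))⁻¹‖₊ : ℝ≥0∞) * (2 * n) := by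
      rw [h3]; exact mul_le_mul_right h2 _
    have h5 : (N k).toReal ≤ ‖((c : ℂ))⁻¹‖ * (2 * n) := by
      have hne : (‖((c : ℂ))⁻¹‖₊ : ℝ≥0∞) * (2 * n) ≠ ⊤ := by
        exact ENNReal.mul_ne_top ENNReal.coe_ne_top (by simp [ENNReal.mul_ne_top])
      have := ENNReal.toReal_mono hne h4
      rwa [ENNReal.toReal_mul, ENNReal.coe_toReal, coe_nnnorm,
        ENNReal.toReal_mul, ENNReal.toReal_ofNat, ENNReal.toReal_natCast] at this
    refine h5.trans (le_of_eq ?_)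
    have hcinv : ‖((c : ℂ))⁻¹‖ = 2 * ‖k‖ / r := by
      rw [norm_inv]
      simp only [Complex.norm_real, Real.norm_eq_abs, abs_of_pos hcpos]
      rw [hc]
      field_simp
    rw [hcinv]
    field_simp
    ring

end CgAux


theorem stmt_3 (μ : Measure Ω) (Λ : ∀ ω, H →L[ℂ] G ω)
    (hsys : IsCgOrthonormalSystem μ Λ)
    (hint : ∀ h : H, Integrable (fun ω => ‖Λ ω h‖ ^ 2) μ)
    (hspan : ∀ Ω₀ : Set Ω, μ Ω₀ = 0 →
      (Submodule.span ℂ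
        (⋃ ω ∈ Ω₀ᶜ, Set.range (⇑(ContinuousLinearMap.adjoint (Λ ω))))).topologicalClosure = ⊤) :
    ∀ h k : H, (inner ℂ h k : ℂ) = ∫ ω, (inner ℂ (Λ ω h) (Λ ω k) : ℂ) ∂μ := by
  classical
  obtain ⟨hmeas, hortho⟩ := hsys
  obtain ⟨B, hB0, hB⟩ := cg_bessel hmeas hint
  have hip : ∀ a b : H, Integrable (fun ω => (inner ℂ (Λ ω a) (Λ ω b) : ℂ)) μ := by
    intro a b
    refine (cg_integrable_prod hmeas hint a b).mono' (hmeas a b).aestronglyMeasurable ?_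
    exact Filter.Eventually.of_forall fun ω => norm_inner_le_norm _ _
  intro h k
  set Nh : ℝ := (eLpNorm (fun ω => ‖Λ ω h‖) 2 μ).toReal with hNh
  have hNH0 : 0 ≤ Nh := ENNReal.toReal_nonneg
  have hbound : ∀ b : H, ‖∫ ω, (inner ℂ (Λ ω h) (Λ ω b) : ℂ) ∂μ‖ ≤ Nh * B * ‖b‖ := by
    intro b
    calc ‖∫ ω, (inner ℂ (Λ ω h) (Λ ω b) : ℂ) ∂μ‖
        ≤ ∫ ω, ‖(inner ℂ (Λ ω h) (Λ ω b) : ℂ)‖ ∂μ := norm_integral_le_integral_norm _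
      _ ≤ ∫ ω, ‖Λ ω h‖ * ‖Λ ω b‖ ∂μ :=
          integral_mono (hip h b).norm (cg_integrable_prod hmeas hint h b)
            fun ω => norm_inner_le_norm _ _
      _ ≤ Nh * (eLpNorm (fun ω => ‖Λ ω b‖) 2 μ).toReal := cg_cs hmeas hint h b
      _ ≤ Nh * (B * ‖b‖) := mul_le_mul_of_nonneg_left (hB b) hNH0
      _ = Nh * B * ‖b‖ := by ring
  set Llin : H →ₗ[ℂ] ℂ :=
    { toFun := fun b => (∫ ω, (inner ℂ (Λ ω h) (Λ ω b) : ℂ) ∂μ) - (inner ℂ h b : ℂ)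
      map_add' := by
        intro b c
        have e1 : (fun ω => (inner ℂ (Λ ω h) (Λ ω (b + c)) : ℂ))
            = fun ω => (inner ℂ (Λ ω h) (Λ ω b) : ℂ) + (inner ℂ (Λ ω h) (Λ ω c) : ℂ) := by
          funext ω; rw [_root_.map_add, inner_add_right]
        rw [e1, integral_add (hip h b) (hip h c), inner_add_right]; ring
      map_smul' := by
        intro m b
        have e1 : (fun ω => (inner ℂ (Λ ω h) (Λ ω (m • b)) : ℂ))
            = fun ω => m • (inner ℂ (Λ ω h) (Λ ω b) : ℂ) := by
          funext ω
          rw [ContinuousLinearMap.map_smul, inner_smul_right, smul_eq_mul]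
        rw [e1, integral_smul, inner_smul_right]
        simp only [smul_eq_mul, RingHom.id_apply]
        ring } with hLlin
  have hLb : ∀ b : H, ‖Llin b‖ ≤ (Nh * B + ‖h‖) * ‖b‖ := by
    intro b
    calc ‖Llin b‖
        ≤ ‖∫ ω, (inner ℂ (Λ ω h) (Λ ω b) : ℂ) ∂μ‖ + ‖(inner ℂ h b : ℂ)‖ := norm_sub_le _ _
      _ ≤ Nh * B * ‖b‖ + ‖h‖ * ‖b‖ := add_le_add (hbound b) (norm_inner_le_norm _ _)
      _ = (Nh * B + ‖h‖) * ‖b‖ := by ring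
  set L : H →L[ℂ] ℂ := Llin.mkContinuous (Nh * B + ‖h‖) hLb with hL
  set P : Ω → Prop := fun ν => ∀ g : G ν, ∀ f : ∀ ω, G ω,
    Integrable (fun ω => ‖f ω‖ ^ 2) μ →
    Integrable (fun ω =>
      (inner ℂ (ContinuousLinearMap.adjoint (Λ ω) (f ω))
        (ContinuousLinearMap.adjoint (Λ ν) g) : ℂ)) μ →
    ∫ ω, (inner ℂ (ContinuousLinearMap.adjoint (Λ ω) (f ω))
        (ContinuousLinearMap.adjoint (Λ ν) g) : ℂ) ∂μ = (inner ℂ (f ν) g : ℂ) with hP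
  have hae : ∀ᵐ ν ∂μ, P ν := hortho
  have hΩ₀ : μ {ν | ¬ P ν} = 0 := by
    rw [← MeasureTheory.ae_iff] at *
    exact hae
  have htop := hspan {ν | ¬ P ν} hΩ₀
  have hmem : ∀ x ∈ ⋃ ω ∈ ({ν | ¬ P ν} : Set Ω)ᶜ,
      Set.range (⇑(ContinuousLinearMap.adjoint (Λ ω))), x ∈ LinearMap.ker (L : H →ₗ[ℂ] ℂ) := by
    intro x hx
    simp only [Set.mem_iUnion, Set.mem_compl_iff, Set.mem_setOf_eq, not_not,
      Set.mem_range] at hx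
    obtain ⟨ν, hν, g, rfl⟩ := hx
    have e1 : (fun ω => (inner ℂ (ContinuousLinearMap.adjoint (Λ ω) ((fun ω => Λ ω h) ω))
        (ContinuousLinearMap.adjoint (Λ ν) g) : ℂ))
        = fun ω => (inner ℂ (Λ ω h) (Λ ω (ContinuousLinearMap.adjoint (Λ ν) g)) : ℂ) := by
      funext ω
      exact ContinuousLinearMap.adjoint_inner_left (Λ ω) _ _
    have hint2 : Integrable (fun ω =>
        (inner ℂ (ContinuousLinearMap.adjoint (Λ ω) ((fun ω => Λ ω h) ω))
          (ContinuousLinearMap.adjoint (Λ ν) g) : ℂ)) μ := by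
      rw [e1]; exact hip h _
    have hconc := hν g (fun ω => Λ ω h) (hint h) hint2
    rw [e1] at hconc
    have e2 : (inner ℂ h (ContinuousLinearMap.adjoint (Λ ν) g) : ℂ) = (inner ℂ (Λ ν h) g : ℂ) :=
      ContinuousLinearMap.adjoint_inner_right (Λ ν) _ _
    rw [LinearMap.mem_ker]
    show Llin (ContinuousLinearMap.adjoint (Λ ν) g) = 0
    rw [hLlin]
    simp only [LinearMap.coe_mk, AddHom.coe_mk]
    rw [hconc, e2, sub_self]
  have hle : (Submodule.span ℂ (⋃ ω ∈ ({ν | ¬ P ν} : Set Ω)ᶜ,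
      Set.range (⇑(ContinuousLinearMap.adjoint (Λ ω))))).topologicalClosure
      ≤ LinearMap.ker (L : H →ₗ[ℂ] ℂ) :=
    Submodule.topologicalClosure_minimal _ (Submodule.span_le.mpr hmem)
      (ContinuousLinearMap.isClosed_ker L)
  rw [htop] at hle
  have hk0 : L k = 0 := hle Submodule.mem_top
  have : Llin k = 0 := hk0
  rw [hLlin] at this
  simp only [LinearMap.coe_mk, AddHom.coe_mk] at this
  exact (sub_eq_zero.mp this).symm
end
end

section
/- Let (Λ_ω)_{ω∈Ω} be a cg-orthonormal basis for H with respect to (H_ω)_{ω∈Ω} and let V ∈ B(H) be a bounded linear operator. Then the family (Λ_ω ∘ V)_{ω∈Ω} is a cg-orthonormal basis for H with respect to (H_ω)_{ω∈Ω} if and only if V is unitary. -/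
open MeasureTheory

noncomputable section

variable {Ω : Type*} [MeasurableSpace Ω]
variable {H : Type*} [NormedAddCommGroup H] [InnerProductSpace ℂ H] [CompleteSpace H]
  [TopologicalSpace.SeparableSpace H]
variable {G : Ω → Type*} [∀ ω, NormedAddCommGroup (G ω)] [∀ ω, InnerProductSpace ℂ (G ω)]
  [∀ ω, CompleteSpace (G ω)]

lemma ofReal_rclike (r : ℝ) : (RCLike.ofReal r : ℂ) = Complex.ofReal r := rfl

lemma recon_integrable (μ : Measure Ω) (Λ : ∀ ω, H →L[ℂ] G ω)
    (hm : CgMeasurable μ Λ)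
    (h2 : ∀ h : H, Integrable (fun ω => ‖Λ ω h‖ ^ 2) μ) (x y : H) :
    Integrable (fun ω => (inner ℂ (Λ ω x) (Λ ω y) : ℂ)) μ := by
  refine Integrable.mono' (g := fun ω => (‖Λ ω x‖ ^ 2 + ‖Λ ω y‖ ^ 2) / 2)
    (((h2 x).add (h2 y)).div_const 2) (hm x y).aestronglyMeasurable ?_
  filter_upwards with ω
  have h1 : ‖(inner ℂ (Λ ω x) (Λ ω y) : ℂ)‖ ≤ ‖Λ ω x‖ * ‖Λ ω y‖ := norm_inner_le_norm _ _
  nlinarith [sq_nonneg (‖Λ ω x‖ - ‖Λ ω y‖)]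

lemma recon_integral (μ : Measure Ω) (Λ : ∀ ω, H →L[ℂ] G ω)
    (h2 : ∀ h : H, Integrable (fun ω => ‖Λ ω h‖ ^ 2) μ ∧
      ∫ ω, ‖Λ ω h‖ ^ 2 ∂μ = ‖h‖ ^ 2) (x y : H) :
    ∫ ω, (inner ℂ (Λ ω x) (Λ ω y) : ℂ) ∂μ = (inner ℂ x y : ℂ) := by
  have key : ∀ ω, (inner ℂ (Λ ω x) (Λ ω y) : ℂ) =
      ((‖Λ ω (x + y)‖ ^ 2 : ℝ) : ℂ) / 4 - ((‖Λ ω (x - y)‖ ^ 2 : ℝ) : ℂ) / 4 +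
      (((‖Λ ω (x - Complex.I • y)‖ ^ 2 : ℝ) : ℂ) / 4 -
        ((‖Λ ω (x + Complex.I • y)‖ ^ 2 : ℝ) : ℂ) / 4) * Complex.I := by
    intro ω
    rw [inner_eq_sum_norm_sq_div_four]
    rw [show (RCLike.I : ℂ) = Complex.I from rfl]
    rw [← ContinuousLinearMap.map_smul, ← map_add, ← map_sub, ← map_sub, ← map_add]
    simp only [ofReal_rclike]
    push_cast
    ring
  have keyH : (inner ℂ x y : ℂ) =
      ((‖x + y‖ ^ 2 : ℝ) : ℂ) / 4 - ((‖x - y‖ ^ 2 : ℝ) : ℂ) / 4 +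
      (((‖x - Complex.I • y‖ ^ 2 : ℝ) : ℂ) / 4 -
        ((‖x + Complex.I • y‖ ^ 2 : ℝ) : ℂ) / 4) * Complex.I := by
    rw [inner_eq_sum_norm_sq_div_four]
    rw [show (RCLike.I : ℂ) = Complex.I from rfl]
    simp only [ofReal_rclike]
    push_cast
    ring
  have int1 : ∀ z : H, Integrable (fun ω => ((‖Λ ω z‖ ^ 2 : ℝ) : ℂ)) μ :=
    fun z => (h2 z).1.ofReal
  have intgl : ∀ z : H, ∫ ω, ((‖Λ ω z‖ ^ 2 : ℝ) : ℂ) ∂μ = ((‖z‖ ^ 2 : ℝ) : ℂ) := by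
    intro z
    rw [show (fun ω => ((‖Λ ω z‖ ^ 2 : ℝ) : ℂ)) =
      (fun ω => (RCLike.ofReal (K := ℂ) (‖Λ ω z‖ ^ 2))) from rfl, integral_ofReal, (h2 z).2]
    rfl
  calc ∫ ω, (inner ℂ (Λ ω x) (Λ ω y) : ℂ) ∂μ
      = ∫ ω, (((‖Λ ω (x + y)‖ ^ 2 : ℝ) : ℂ) / 4 - ((‖Λ ω (x - y)‖ ^ 2 : ℝ) : ℂ) / 4 +
          (((‖Λ ω (x - Complex.I • y)‖ ^ 2 : ℝ) : ℂ) / 4 -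
            ((‖Λ ω (x + Complex.I • y)‖ ^ 2 : ℝ) : ℂ) / 4) * Complex.I) ∂μ := by
        simp only [key]
    _ = (inner ℂ x y : ℂ) := by
        have iA : Integrable (fun ω => ((‖Λ ω (x + y)‖ ^ 2 : ℝ) : ℂ) / 4 -
            ((‖Λ ω (x - y)‖ ^ 2 : ℝ) : ℂ) / 4) μ :=
          ((int1 _).div_const 4).sub ((int1 _).div_const 4)
        have iB : Integrable (fun ω => ((‖Λ ω (x - Complex.I • y)‖ ^ 2 : ℝ) : ℂ) / 4 -
            ((‖Λ ω (x + Complex.I • y)‖ ^ 2 : ℝ) : ℂ) / 4) μ :=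
          ((int1 _).div_const 4).sub ((int1 _).div_const 4)
        have iC : Integrable (fun ω => (((‖Λ ω (x - Complex.I • y)‖ ^ 2 : ℝ) : ℂ) / 4 -
            ((‖Λ ω (x + Complex.I • y)‖ ^ 2 : ℝ) : ℂ) / 4) * Complex.I) μ := iB.mul_const _
        have d1 : Integrable (fun ω => ((‖Λ ω (x + y)‖ ^ 2 : ℝ) : ℂ) / 4) μ := (int1 _).div_const 4
        have d2 : Integrable (fun ω => ((‖Λ ω (x - y)‖ ^ 2 : ℝ) : ℂ) / 4) μ := (int1 _).div_const 4
        have d3 : Integrable (fun ω => ((‖Λ ω (x - Complex.I • y)‖ ^ 2 : ℝ) : ℂ) / 4) μ :=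
          (int1 _).div_const 4
        have d4 : Integrable (fun ω => ((‖Λ ω (x + Complex.I • y)‖ ^ 2 : ℝ) : ℂ) / 4) μ :=
          (int1 _).div_const 4
        rw [integral_add iA iC, integral_mul_const Complex.I _, integral_sub d1 d2, integral_sub d3 d4,
          integral_div, integral_div, integral_div, integral_div,
          intgl, intgl, intgl, intgl, keyH]

theorem stmt_6 (μ : Measure Ω) (Λ : ∀ ω, H →L[ℂ] G ω)
    (hΛ : IsCgOrthonormalBasis μ Λ) (V : H →L[ℂ] H) :
    IsCgOrthonormalBasis μ (fun ω => (Λ ω).comp V) ↔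
      ((ContinuousLinearMap.adjoint V).comp V = ContinuousLinearMap.id ℂ H ∧
        V.comp (ContinuousLinearMap.adjoint V) = ContinuousLinearMap.id ℂ H) := by
  obtain ⟨⟨hm, ho⟩, h3⟩ := hΛ
  constructor
  · rintro ⟨⟨hm', ho'⟩, h3'⟩
    have hiso : ∀ h : H, ‖V h‖ = ‖h‖ := by
      intro h
      have e1 := (h3 (V h)).2
      have e2 := (h3' h).2
      simp only [ContinuousLinearMap.comp_apply] at e2
      have hsq : ‖V h‖ ^ 2 = ‖h‖ ^ 2 := by rw [← e1, e2]
      calc ‖V h‖ = Real.sqrt (‖V h‖ ^ 2) := (Real.sqrt_sq (norm_nonneg _)).symm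
        _ = Real.sqrt (‖h‖ ^ 2) := by rw [hsq]
        _ = ‖h‖ := Real.sqrt_sq (norm_nonneg _)
    have hVV : (ContinuousLinearMap.adjoint V).comp V = 1 :=
      (ContinuousLinearMap.norm_map_iff_adjoint_comp_self V).mp hiso
    have hVVid : ∀ z : H, ContinuousLinearMap.adjoint V (V z) = z := by
      intro z
      have := congrArg (fun T => T z) hVV
      simpa using this
    have hinj : ∀ x : H, ContinuousLinearMap.adjoint V x = 0 → x = 0 := by
      intro x hx
      have hae : ∀ᵐ ν ∂μ, Λ ν x = 0 := by
        filter_upwards [ho'] with ν hν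
        set g : G ν := Λ ν x with hgdef
        set y : H := V (ContinuousLinearMap.adjoint V (ContinuousLinearMap.adjoint (Λ ν) g))
          with hydef
        have hpt : ∀ ω, (inner ℂ
            (ContinuousLinearMap.adjoint ((Λ ω).comp V) (Λ ω x))
            (ContinuousLinearMap.adjoint ((Λ ν).comp V) g) : ℂ) =
            (inner ℂ (Λ ω x) (Λ ω y) : ℂ) := by
          intro ω
          rw [ContinuousLinearMap.adjoint_comp, ContinuousLinearMap.adjoint_comp]
          simp only [ContinuousLinearMap.comp_apply]
          rw [ContinuousLinearMap.adjoint_inner_left, ContinuousLinearMap.adjoint_inner_left]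
        have hint : Integrable (fun ω => (inner ℂ
            (ContinuousLinearMap.adjoint ((Λ ω).comp V) (Λ ω x))
            (ContinuousLinearMap.adjoint ((Λ ν).comp V) g) : ℂ)) μ := by
          simp only [hpt]
          exact recon_integrable μ Λ hm (fun h => (h3 h).1) x y
        have := hν g (fun ω => Λ ω x) (h3 x).1 hint
        have hzero : ∫ ω, (inner ℂ
            (ContinuousLinearMap.adjoint ((Λ ω).comp V) (Λ ω x))
            (ContinuousLinearMap.adjoint ((Λ ν).comp V) g) : ℂ) ∂μ = 0 := by
          simp only [hpt]
          rw [recon_integral μ Λ h3 x y]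
          rw [hydef, ← ContinuousLinearMap.adjoint_inner_left V, hx]
          simp
        rw [hzero] at this
        have : (inner ℂ (Λ ν x) g : ℂ) = 0 := this.symm
        rw [hgdef] at this
        exact inner_self_eq_zero.mp this
      have hnorm : ∫ ω, ‖Λ ω x‖ ^ 2 ∂μ = 0 := by
        rw [integral_congr_ae (g := fun _ => (0 : ℝ)) ?_, integral_zero]
        filter_upwards [hae] with ω hω
        simp [hω]
      have : ‖x‖ ^ 2 = 0 := by rw [← (h3 x).2, hnorm]
      have : ‖x‖ = 0 := by nlinarith [norm_nonneg x]
      exact norm_eq_zero.mp this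
    constructor
    · exact hVV
    · ext z
      have hker : ContinuousLinearMap.adjoint V (V (ContinuousLinearMap.adjoint V z) - z) = 0 := by
        rw [map_sub, hVVid]
        simp
      have := hinj _ hker
      have := sub_eq_zero.mp this
      simpa using this
  · rintro ⟨h1, h2'⟩
    have hVVid : ∀ z : H, V (ContinuousLinearMap.adjoint V z) = z := by
      intro z
      have := congrArg (fun T => T z) h2'
      simpa using this
    have hiso : ∀ h : H, ‖V h‖ = ‖h‖ :=
      (ContinuousLinearMap.norm_map_iff_adjoint_comp_self V).mpr h1
    refine ⟨⟨?_, ?_⟩, ?_⟩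
    · intro h k
      simpa using hm (V h) (V k)
    · filter_upwards [ho] with ν hν
      intro g f hf hint
      have hpt : ∀ ω, (inner ℂ
          (ContinuousLinearMap.adjoint ((Λ ω).comp V) (f ω))
          (ContinuousLinearMap.adjoint ((Λ ν).comp V) g) : ℂ) =
          (inner ℂ (ContinuousLinearMap.adjoint (Λ ω) (f ω))
            (ContinuousLinearMap.adjoint (Λ ν) g) : ℂ) := by
        intro ω
        rw [ContinuousLinearMap.adjoint_comp, ContinuousLinearMap.adjoint_comp]
        simp only [ContinuousLinearMap.comp_apply]
        rw [ContinuousLinearMap.adjoint_inner_left, hVVid]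
      simp only [hpt] at hint ⊢
      exact hν g f hf hint
    · intro h
      have h3h := h3 (V h)
      refine ⟨?_, ?_⟩
      · simpa only [ContinuousLinearMap.comp_apply] using h3h.1
      · simp only [ContinuousLinearMap.comp_apply]
        rw [h3h.2, hiso]
end
end

section
/- Let (Ω, μ) be a σ-finite measure space, let Λ_ω : H → H_ω be bounded linear operators such that for all h, k ∈ H the function ω ↦ ⟨Λ_ω h, Λ_ω k⟩ is measurable, let κ be a countable index set, and for each ω ∈ Ω let (e_{ω,k})_{k∈κ} be a Hilbert (orthonormal) basis of H_ω. Define u_{ω,k} = Λ_ω*(e_{ω,k}) ∈ H. Then for 0 < A ≤ B, the family (Λ_ω)_{ω∈Ω} is a cg-frame for H with bounds A and B if and only if for every h ∈ H, A‖h‖² ≤ ∫_Ω ∑_{k∈κ} |⟨h, u_{ω,k}⟩|² dμ(ω) ≤ B‖h‖²; that is, (u_{ω,k})_{(ω,k)∈Ω×κ} is a continuous frame for H with respect to the product of μ with counting measure, with the same bounds. The same equivalence holds for the Bessel (upper bound only) and tight (A = B) cases. -/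
open MeasureTheory

noncomputable section

variable {Ω : Type*} [MeasurableSpace Ω]
variable {H : Type*} [NormedAddCommGroup H] [InnerProductSpace ℂ H] [CompleteSpace H]
  [TopologicalSpace.SeparableSpace H]
variable {G : Ω → Type*} [∀ ω, NormedAddCommGroup (G ω)] [∀ ω, InnerProductSpace ℂ (G ω)]
  [∀ ω, CompleteSpace (G ω)]

private lemma tsum_inner_adjoint_eq_norm_sq
    {H : Type*} [NormedAddCommGroup H] [InnerProductSpace ℂ H] [CompleteSpace H]
    {G : Type*} [NormedAddCommGroup G] [InnerProductSpace ℂ G] [CompleteSpace G]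
    {κ : Type*} (e : HilbertBasis κ ℂ G) (T : H →L[ℂ] G) (h : H) :
    ∑' k : κ, ‖(inner ℂ h (ContinuousLinearMap.adjoint T (e k)) : ℂ)‖ ^ 2 = ‖T h‖ ^ 2 := by
  have h1 : ∀ k, ‖(inner ℂ h (ContinuousLinearMap.adjoint T (e k)) : ℂ)‖ = ‖e.repr (T h) k‖ := by
    intro k
    rw [ContinuousLinearMap.adjoint_inner_right, e.repr_apply_apply,
      ← inner_conj_symm, RCLike.norm_conj]
  simp_rw [h1]
  have h2 := lp.norm_rpow_eq_tsum (p := 2) (by norm_num) (e.repr (T h))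
  simp only [ENNReal.toReal_ofNat, show ((2:ℝ)) = ((2:ℕ):ℝ) by norm_num,
    Real.rpow_natCast] at h2
  rw [← h2, e.repr.norm_map (T h)]

theorem stmt_8 (μ : Measure Ω) [SigmaFinite μ] (Λ : ∀ ω, H →L[ℂ] G ω)
    (hmeas : CgMeasurable μ Λ)
    (κ : Type*) [Countable κ] (e : ∀ ω, HilbertBasis κ ℂ (G ω))
    (u : ∀ ω, κ → H) (hu : ∀ ω k, u ω k = ContinuousLinearMap.adjoint (Λ ω) (e ω k))
    (A B : ℝ) (hA : 0 < A) (hAB : A ≤ B) :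
    (IsCgFrameWith μ Λ A B ↔
      ∀ h : H, Integrable (fun ω => ∑' k : κ, ‖(inner ℂ h (u ω k) : ℂ)‖ ^ 2) μ ∧
        A * ‖h‖ ^ 2 ≤ ∫ ω, ∑' k : κ, ‖(inner ℂ h (u ω k) : ℂ)‖ ^ 2 ∂μ ∧
        ∫ ω, ∑' k : κ, ‖(inner ℂ h (u ω k) : ℂ)‖ ^ 2 ∂μ ≤ B * ‖h‖ ^ 2) ∧
    (IsCgBessel μ Λ B ↔
      ∀ h : H, Integrable (fun ω => ∑' k : κ, ‖(inner ℂ h (u ω k) : ℂ)‖ ^ 2) μ ∧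
        ∫ ω, ∑' k : κ, ‖(inner ℂ h (u ω k) : ℂ)‖ ^ 2 ∂μ ≤ B * ‖h‖ ^ 2) ∧
    (IsTightCgFrame μ Λ A ↔
      ∀ h : H, Integrable (fun ω => ∑' k : κ, ‖(inner ℂ h (u ω k) : ℂ)‖ ^ 2) μ ∧
        ∫ ω, ∑' k : κ, ‖(inner ℂ h (u ω k) : ℂ)‖ ^ 2 ∂μ = A * ‖h‖ ^ 2) := by
  have key : ∀ h : H, (fun ω => ∑' k : κ, ‖(inner ℂ h (u ω k) : ℂ)‖ ^ 2)
      = fun ω => ‖Λ ω h‖ ^ 2 := by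
    intro h
    funext ω
    simp_rw [hu]
    exact tsum_inner_adjoint_eq_norm_sq (e ω) (Λ ω) h
  simp only [key]
  exact ⟨⟨fun H => H.2, fun H => ⟨hmeas, H⟩⟩, ⟨fun H => H.2, fun H => ⟨hmeas, H⟩⟩,
    ⟨fun H => H.2, fun H => ⟨hmeas, H⟩⟩⟩
end
end

section
/- Let (Λ_ω)_{ω∈Ω} be a cg-frame for H with bounds A and B, and let V ∈ B(H) be a bounded linear operator. Then (Λ_ω ∘ V)_{ω∈Ω} is a cg-frame for H (with some bounds) if and only if there exists a constant α > 0 such that ‖Vf‖² ≥ α‖f‖² for all f ∈ H. -/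
open MeasureTheory

noncomputable section

variable {Ω : Type*} [MeasurableSpace Ω]
variable {H : Type*} [NormedAddCommGroup H] [InnerProductSpace ℂ H] [CompleteSpace H]
  [TopologicalSpace.SeparableSpace H]
variable {G : Ω → Type*} [∀ ω, NormedAddCommGroup (G ω)] [∀ ω, InnerProductSpace ℂ (G ω)]
  [∀ ω, CompleteSpace (G ω)]

theorem stmt_9 (μ : Measure Ω) (Λ : ∀ ω, H →L[ℂ] G ω) (A B : ℝ)
    (hA : 0 < A) (hAB : A ≤ B) (hΛ : IsCgFrameWith μ Λ A B) (V : H →L[ℂ] H) :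
    IsCgFrame μ (fun ω => (Λ ω).comp V) ↔
      ∃ α : ℝ, 0 < α ∧ ∀ f : H, α * ‖f‖ ^ 2 ≤ ‖V f‖ ^ 2 := by
  have hB : 0 < B := lt_of_lt_of_le hA hAB
  constructor
  · rintro ⟨A', B', hA', hA'B', hmeas, hbd⟩
    refine ⟨A' / B, div_pos hA' hB, fun f => ?_⟩
    have h1 := (hbd f).2.1
    have h2 := (hΛ.2 (V f)).2.2
    simp only [ContinuousLinearMap.comp_apply] at h1
    rw [div_mul_eq_mul_div, div_le_iff₀ hB]
    calc A' * ‖f‖ ^ 2 ≤ ∫ ω, ‖Λ ω (V f)‖ ^ 2 ∂μ := h1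
      _ ≤ B * ‖V f‖ ^ 2 := h2
      _ = ‖V f‖ ^ 2 * B := mul_comm _ _
  · rintro ⟨α, hα, hV⟩
    refine ⟨A * α, A * α + B * ‖V‖ ^ 2, by positivity,
      le_add_of_nonneg_right (by positivity), fun h k => hΛ.1 (V h) (V k), fun h => ?_⟩
    obtain ⟨hint, hlb, hub⟩ := hΛ.2 (V h)
    refine ⟨hint, ?_, ?_⟩
    · calc A * α * ‖h‖ ^ 2 = A * (α * ‖h‖ ^ 2) := by ring
        _ ≤ A * ‖V h‖ ^ 2 := mul_le_mul_of_nonneg_left (hV h) hA.le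
        _ ≤ ∫ ω, ‖((Λ ω).comp V) h‖ ^ 2 ∂μ := hlb
    · have hVh : ‖V h‖ ≤ ‖V‖ * ‖h‖ := V.le_opNorm h
      calc ∫ ω, ‖((Λ ω).comp V) h‖ ^ 2 ∂μ ≤ B * ‖V h‖ ^ 2 := hub
        _ ≤ B * (‖V‖ * ‖h‖) ^ 2 := by
            apply mul_le_mul_of_nonneg_left _ hB.le
            exact pow_le_pow_left₀ (norm_nonneg _) hVh 2
        _ = B * ‖V‖ ^ 2 * ‖h‖ ^ 2 := by ring
        _ ≤ (A * α + B * ‖V‖ ^ 2) * ‖h‖ ^ 2 := by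
            apply mul_le_mul_of_nonneg_right _ (by positivity)
            nlinarith [hA.le, hα.le]
end
end

section
/- Let (Λ_ω)_{ω∈Ω} be a cg-frame for H with bounds A and B, and let V ∈ B(H) be a bounded linear operator. Then (Λ_ω ∘ V)_{ω∈Ω} is a cg-frame for H (with some bounds) if and only if the adjoint V* is surjective. -/
open MeasureTheory

noncomputable section

variable {Ω : Type*} [MeasurableSpace Ω]
variable {H : Type*} [NormedAddCommGroup H] [InnerProductSpace ℂ H] [CompleteSpace H]
  [TopologicalSpace.SeparableSpace H]
variable {G : Ω → Type*} [∀ ω, NormedAddCommGroup (G ω)] [∀ ω, InnerProductSpace ℂ (G ω)]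
  [∀ ω, CompleteSpace (G ω)]

lemma adjoint_surjective_of_bddBelow {V : H →L[ℂ] H} {c : ℝ} (hc : 0 < c)
    (hb : ∀ x, c * ‖x‖ ≤ ‖V x‖) :
    Function.Surjective ⇑(ContinuousLinearMap.adjoint V) := by
  set T := (ContinuousLinearMap.adjoint V).comp V with hTdef
  have hT : ∀ x, c ^ 2 * ‖x‖ ≤ ‖T x‖ := by
    intro x
    rcases eq_or_ne x 0 with rfl | hx
    · simp
    have h1 : (c * ‖x‖) ^ 2 ≤ ‖V x‖ ^ 2 :=
      pow_le_pow_left₀ (by positivity) (hb x) 2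
    have h2 : ‖V x‖ ^ 2 = RCLike.re (inner ℂ (T x) x : ℂ) := by
      simp [hTdef, ContinuousLinearMap.adjoint_inner_left, ← @inner_self_eq_norm_sq ℂ]
    have h3 : RCLike.re (inner ℂ (T x) x : ℂ) ≤ ‖T x‖ * ‖x‖ := by
      calc RCLike.re (inner ℂ (T x) x : ℂ) ≤ ‖(inner ℂ (T x) x : ℂ)‖ := RCLike.re_le_norm _
        _ ≤ ‖T x‖ * ‖x‖ := norm_inner_le_norm _ _
    have hxpos : 0 < ‖x‖ := norm_pos_iff.mpr hx
    nlinarith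
  set K : NNReal := ⟨c ^ 2, sq_nonneg c⟩ with hK
  have hanti : AntilipschitzWith K⁻¹ T := by
    apply T.antilipschitz_of_bound
    intro x
    have hc2 : (0:ℝ) < c ^ 2 := by positivity
    have hKc : ((K⁻¹ : NNReal) : ℝ) = (c ^ 2)⁻¹ := by exact NNReal.coe_inv K
    rw [hKc, inv_mul_eq_div, le_div_iff₀ hc2]
    nlinarith [hT x]
  have hclosed : IsClosed (Set.range T) := hanti.isClosed_range T.uniformContinuous
  have hrange : LinearMap.range (T : H →ₗ[ℂ] H) = ⊤ := by
    have : CompleteSpace (LinearMap.range (T : H →ₗ[ℂ] H)) := by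
      have hcl : IsClosed (LinearMap.range (T : H →ₗ[ℂ] H) : Set H) := by
        rw [LinearMap.coe_range]; exact hclosed
      exact IsClosed.completeSpace_coe (hs := hcl)
    rw [← Submodule.orthogonal_eq_bot_iff]
    rw [Submodule.eq_bot_iff]
    intro x hx
    have h0 : (inner ℂ (T x) x : ℂ) = 0 :=
      hx (T x) (LinearMap.mem_range_self _ x)
    have : (inner ℂ (V x) (V x) : ℂ) = 0 := by
      rwa [hTdef, ContinuousLinearMap.comp_apply, ContinuousLinearMap.adjoint_inner_left] at h0
    have hVx : V x = 0 := inner_self_eq_zero.mp this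
    have h5 := hb x
    rw [hVx] at h5
    simp only [norm_zero] at h5
    exact norm_le_zero_iff.mp (by nlinarith [norm_nonneg x])
  intro h
  obtain ⟨x, hx⟩ := LinearMap.range_eq_top.mp hrange h
  exact ⟨V x, hx⟩

lemma bddBelow_of_adjoint_surjective {V : H →L[ℂ] H}
    (hs : Function.Surjective ⇑(ContinuousLinearMap.adjoint V)) :
    ∃ C > 0, ∀ h : H, ‖h‖ ≤ C * ‖V h‖ := by
  obtain ⟨C, hC0, hCp⟩ := (ContinuousLinearMap.adjoint V).exists_preimage_norm_le hs
  refine ⟨C, hC0, fun h => ?_⟩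
  obtain ⟨g, hg, hgn⟩ := hCp h
  have key : ‖h‖ ^ 2 ≤ C * ‖h‖ * ‖V h‖ := by
    have h1 : ‖h‖ ^ 2 = RCLike.re (inner ℂ h h : ℂ) := (inner_self_eq_norm_sq h).symm
    have h2 : (inner ℂ h h : ℂ) = inner ℂ g (V h) := by
      rw [← hg, ContinuousLinearMap.adjoint_inner_left]
    have h3 : RCLike.re (inner ℂ g (V h) : ℂ) ≤ ‖g‖ * ‖V h‖ :=
      le_trans (RCLike.re_le_norm _) (norm_inner_le_norm _ _)
    have h4 : ‖g‖ * ‖V h‖ ≤ C * ‖h‖ * ‖V h‖ :=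
      mul_le_mul_of_nonneg_right hgn (norm_nonneg _)
    rw [h1, h2]; linarith
  rcases eq_or_lt_of_le (norm_nonneg h) with h0 | h0
  · rw [← h0]; positivity
  · nlinarith

theorem stmt_10 (μ : Measure Ω) (Λ : ∀ ω, H →L[ℂ] G ω) (A B : ℝ)
    (hA : 0 < A) (hAB : A ≤ B) (hΛ : IsCgFrameWith μ Λ A B) (V : H →L[ℂ] H) :
    IsCgFrame μ (fun ω => (Λ ω).comp V) ↔
      Function.Surjective ⇑(ContinuousLinearMap.adjoint V) := by
  constructor
  · rintro ⟨A', B', hA', hA'B', hmeas', hprop'⟩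
    have hB : 0 < B := lt_of_lt_of_le hA hAB
    set c : ℝ := Real.sqrt (A' / B) with hc
    have hcpos : 0 < c := Real.sqrt_pos.mpr (div_pos hA' hB)
    refine adjoint_surjective_of_bddBelow hcpos (fun h => ?_)
    obtain ⟨_, hlow, _⟩ := hprop' h
    obtain ⟨_, _, hup⟩ := hΛ.2 (V h)
    have hkey : A' * ‖h‖ ^ 2 ≤ B * ‖V h‖ ^ 2 := by
      refine le_trans hlow (le_trans ?_ hup)
      exact le_of_eq rfl
    have hc2 : c ^ 2 = A' / B := Real.sq_sqrt (le_of_lt (div_pos hA' hB))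
    have hsq : (c * ‖h‖) ^ 2 ≤ ‖V h‖ ^ 2 := by
      rw [mul_pow, hc2]
      rw [div_mul_eq_mul_div, div_le_iff₀ hB]
      nlinarith
    exact (pow_le_pow_iff_left₀ (mul_nonneg hcpos.le (norm_nonneg h))
      (norm_nonneg (V h)) two_ne_zero).mp hsq
  · intro hs
    obtain ⟨C, hC0, hCb⟩ := bddBelow_of_adjoint_surjective hs
    have hB : 0 < B := lt_of_lt_of_le hA hAB
    refine ⟨A / C ^ 2, max (B * ‖V‖ ^ 2) (A / C ^ 2), by positivity, le_max_right _ _,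
      fun h k => hΛ.1 (V h) (V k), fun h => ?_⟩
    obtain ⟨hint, hlo, hhi⟩ := hΛ.2 (V h)
    refine ⟨hint, ?_, ?_⟩
    · refine le_trans ?_ hlo
      have h1 : ‖h‖ ^ 2 ≤ C ^ 2 * ‖V h‖ ^ 2 := by
        have := hCb h
        nlinarith [norm_nonneg h, norm_nonneg (V h)]
      have hC2 : (0:ℝ) < C ^ 2 := by positivity
      rw [div_mul_eq_mul_div, div_le_iff₀ hC2]
      nlinarith
    · refine le_trans hhi ?_
      have h2 : ‖V h‖ ≤ ‖V‖ * ‖h‖ := V.le_opNorm h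
      have h3 : B * ‖V h‖ ^ 2 ≤ (B * ‖V‖ ^ 2) * ‖h‖ ^ 2 := by
        have h2' : ‖V h‖ ^ 2 ≤ (‖V‖ * ‖h‖) ^ 2 := pow_le_pow_left₀ (norm_nonneg _) h2 2
        nlinarith [hB.le]
      refine le_trans h3 ?_
      exact mul_le_mul_of_nonneg_right (le_max_left _ _) (by positivity)
end
end

section
/- Let M be a closed subspace of H, let (Λ_ω)_{ω∈Ω} be a cg-frame for H with bounds A and B, and let V ∈ B(H, M) be a bounded linear operator with Hilbert adjoint V* : M → H. Then the family (Λ_ω ∘ V*)_{ω∈Ω} of operators M → H_ω is a cg-frame for M (with some bounds) if and only if there exists a constant α > 0 such that ‖V*f‖² ≥ α‖f‖² for all f ∈ M. -/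
open MeasureTheory

noncomputable section

variable {Ω : Type*} [MeasurableSpace Ω]
variable {H : Type*} [NormedAddCommGroup H] [InnerProductSpace ℂ H] [CompleteSpace H]
  [TopologicalSpace.SeparableSpace H]
variable {G : Ω → Type*} [∀ ω, NormedAddCommGroup (G ω)] [∀ ω, InnerProductSpace ℂ (G ω)]
  [∀ ω, CompleteSpace (G ω)]

theorem stmt_11 (μ : Measure Ω) (Λ : ∀ ω, H →L[ℂ] G ω) (A B : ℝ)
    (hA : 0 < A) (hAB : A ≤ B) (hΛ : IsCgFrameWith μ Λ A B)
    (M : Submodule ℂ H) [CompleteSpace M] (V : H →L[ℂ] M) :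
    IsCgFrame μ (fun ω => (Λ ω).comp (ContinuousLinearMap.adjoint V)) ↔
      ∃ α : ℝ, 0 < α ∧ ∀ f : M, α * ‖f‖ ^ 2 ≤ ‖ContinuousLinearMap.adjoint V f‖ ^ 2 := by
  have hB : 0 < B := lt_of_lt_of_le hA hAB
  constructor
  · rintro ⟨A', B', hA', hA'B', hmeas, hbnd⟩
    refine ⟨A' / B, div_pos hA' hB, fun f => ?_⟩
    have h1 := (hbnd f).2.1
    have h2 := (hΛ.2 (ContinuousLinearMap.adjoint V f)).2.2
    have h3 : A' * ‖f‖ ^ 2 ≤ B * ‖ContinuousLinearMap.adjoint V f‖ ^ 2 := by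
      calc A' * ‖f‖ ^ 2 ≤ _ := h1
        _ ≤ _ := h2
    rw [div_mul_eq_mul_div, div_le_iff₀ hB]
    linarith
  · rintro ⟨α, hα, hb⟩
    refine ⟨A * α, max (A * α) (B * ‖ContinuousLinearMap.adjoint V‖ ^ 2),
      mul_pos hA hα, le_max_left _ _, fun h k => hΛ.1 _ _, fun f => ?_⟩
    refine ⟨(hΛ.2 (ContinuousLinearMap.adjoint V f)).1, ?_, ?_⟩
    · calc A * α * ‖f‖ ^ 2 ≤ A * ‖ContinuousLinearMap.adjoint V f‖ ^ 2 := by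
            rw [mul_assoc]; exact mul_le_mul_of_nonneg_left (hb f) hA.le
        _ ≤ _ := (hΛ.2 (ContinuousLinearMap.adjoint V f)).2.1
    · calc ∫ ω, ‖Λ ω (ContinuousLinearMap.adjoint V f)‖ ^ 2 ∂μ
          ≤ B * ‖ContinuousLinearMap.adjoint V f‖ ^ 2 :=
            (hΛ.2 (ContinuousLinearMap.adjoint V f)).2.2
        _ ≤ B * (‖ContinuousLinearMap.adjoint V‖ ^ 2 * ‖f‖ ^ 2) := by
            apply mul_le_mul_of_nonneg_left _ hB.le
            rw [← mul_pow]
            exact pow_le_pow_left₀ (norm_nonneg _) ((ContinuousLinearMap.adjoint V).le_opNorm f) 2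
        _ = B * ‖ContinuousLinearMap.adjoint V‖ ^ 2 * ‖f‖ ^ 2 := by ring
        _ ≤ max (A * α) (B * ‖ContinuousLinearMap.adjoint V‖ ^ 2) * ‖f‖ ^ 2 :=
            mul_le_mul_of_nonneg_right (le_max_right _ _) (by positivity)
end
end
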